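/- Every stochastic-type matrix (a matrix with nonnegative real entries) f : I → J factors as f = p ∘ (id_I ⊗ mix_J), where mix_J is the column vector of all 1s indexed by J, and p : I × J → J is the matrix with ((i,j), j')-entry δ_{j j'} · f_{j i}; moreover p has at most one nonzero entry in each column. -/

import Mathlib

open scoped NNReal

/-- Every matrix `f` of nonnegative reals factors as `p ∘ (id_I ⊗ mix_J)`, where
`id_I ⊗ mix_J : I → I × J` has `((i,j), i')`-entry `δ_{i i'}` and `p : I × J → J` has
`(j', (i,j))`-entry `δ_{j j'} · f_{j i}`; moreover `p` has at most one nonzero entry in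
each column. -/
theorem stoch_factorisation {I J : Type} [Fintype I] [Fintype J]
    [DecidableEq I] [DecidableEq J] (f : Matrix J I ℝ≥0) :
    let M : Matrix (I × J) I ℝ≥0 := fun x i' => if x.1 = i' then 1 else 0
    let p : Matrix J (I × J) ℝ≥0 := fun j' x => if x.2 = j' then f j' x.1 else 0
    p * M = f ∧ (∀ (x : I × J) (j j' : J), p j x ≠ 0 → p j' x ≠ 0 → j = j') := by
  intro M p
  constructor
  · ext j i : 1
    rw [Matrix.mul_apply]; simp only [M, p]
    rw [Finset.sum_eq_single (i, j)] <;> simp_all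
  · intro x j j' hj hj'
    simp only [p, ne_eq, ite_eq_right_iff, not_forall] at hj hj'
    rw [← hj.1, ← hj'.1]
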